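/- Let $M^* = \begin{pmatrix} A & b \\ b^T & 0 \end{pmatrix}$ be a real symmetric matrix with $A$ of size $n-2$ and $b \in \mathbb{R}^{n-2}$, and let $\lambda \in \mathbb{R}$. Then the matrix $M = \begin{pmatrix} A & b/\sqrt{2} & b/\sqrt{2} \\ b^T/\sqrt{2} & \lambda & -\lambda \\ b^T/\sqrt{2} & -\lambda & \lambda \end{pmatrix}$ has characteristic polynomial equal to $(x - 2\lambda)$ times the characteristic polynomial of $M^*$. -/

import Mathlib

open Polynomial Matrix

lemma charpoly_conj_self {n : Type*} [Fintype n] [DecidableEq n]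
    (P M : Matrix n n ℝ) (hP : P * P = 1) :
    (P * M * P).charpoly = M.charpoly := by
  have hP' : (C : ℝ →+* ℝ[X]).mapMatrix P * (C : ℝ →+* ℝ[X]).mapMatrix P = 1 := by
    rw [← _root_.map_mul, hP, _root_.map_one]
  have key : charmatrix (P * M * P)
      = (C : ℝ →+* ℝ[X]).mapMatrix P * charmatrix M * (C : ℝ →+* ℝ[X]).mapMatrix P := by
    unfold charmatrix
    rw [mul_sub, sub_mul, _root_.map_mul, _root_.map_mul]
    congr 1
    rw [← (Matrix.scalar_commute (X : ℝ[X]) (fun r => Commute.all _ _) _).eq, mul_assoc, hP',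
      mul_one]
  rw [Matrix.charpoly, key, det_mul, det_mul, mul_comm, ← mul_assoc, ← det_mul, hP',
    det_one, one_mul, Matrix.charpoly]

theorem charpoly_true_twin_diag_lambda (m : ℕ)
    (A : Matrix (Fin m) (Fin m) ℝ) (hA : A.IsSymm) (b : Fin m → ℝ) (l : ℝ) :
    (Matrix.fromBlocks A
        (Matrix.of fun i (_ : Fin 2) => b i / Real.sqrt 2)
        (Matrix.of fun (_ : Fin 2) j => b j / Real.sqrt 2)
        (Matrix.of fun (k k' : Fin 2) => if k = k' then l else -l)).charpoly =
      (X - C (2 * l)) * (Matrix.fromBlocks A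
        (Matrix.of fun i (_ : Fin 1) => b i)
        (Matrix.of fun (_ : Fin 1) j => b j)
        (Matrix.of fun (_ : Fin 1) (_ : Fin 1) => (0 : ℝ))).charpoly := by
  have h2 : Real.sqrt 2 * Real.sqrt 2 = 2 := Real.mul_self_sqrt (by norm_num)
  have hne : Real.sqrt 2 ≠ 0 := by positivity
  have h2f : ∀ k : Fin 2, k = 0 ∨ k = 1 := by decide
  have h1f : ∀ k : Fin 1, k = 0 := by decide
  set Q : Matrix (Fin 2) (Fin 2) ℝ := (Real.sqrt 2)⁻¹ • !![1,1;1,-1] with hQ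
  set P : Matrix (Fin m ⊕ Fin 2) (Fin m ⊕ Fin 2) ℝ := fromBlocks 1 0 0 Q with hPdef
  set B : Matrix (Fin m) (Fin 2) ℝ := Matrix.of fun i (_ : Fin 2) => b i / Real.sqrt 2 with hB
  set Ct : Matrix (Fin 2) (Fin m) ℝ := Matrix.of fun (_ : Fin 2) j => b j / Real.sqrt 2 with hCt
  set D : Matrix (Fin 2) (Fin 2) ℝ :=
    Matrix.of fun (k k' : Fin 2) => if k = k' then l else -l with hD
  have hQQ : Q * Q = 1 := by
    ext i j
    rcases h2f i with rfl | rfl <;> rcases h2f j with rfl | rfl <;>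
      simp [hQ, Matrix.mul_apply, Fin.sum_univ_two, Matrix.one_apply] <;>
      field_simp <;> nlinarith [h2]
  have hPP : P * P = 1 := by
    rw [hPdef, fromBlocks_multiply]
    simp [hQQ, fromBlocks_one]
  have hBQ : B * Q = Matrix.of fun i (k : Fin 2) => if k = 0 then b i else 0 := by
    ext i k
    rcases h2f k with rfl | rfl <;>
      simp [hB, hQ, Matrix.mul_apply, Fin.sum_univ_two] <;> field_simp <;> norm_num [Real.sq_sqrt]
  have hQC : Q * Ct = Matrix.of fun (k : Fin 2) j => if k = 0 then b j else 0 := by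
    ext k j
    rcases h2f k with rfl | rfl <;>
      simp [hCt, hQ, Matrix.mul_apply, Fin.sum_univ_two] <;> field_simp <;> norm_num [Real.sq_sqrt, mul_comm]
  have hQDQ : Q * D * Q = Matrix.of fun (k k' : Fin 2) =>
      if k = 1 ∧ k' = 1 then 2 * l else 0 := by
    ext k k'
    rcases h2f k with rfl | rfl <;> rcases h2f k' with rfl | rfl <;>
      simp +decide [hQ, hD, Matrix.mul_apply, Fin.sum_univ_two, Matrix.vecHead, Matrix.vecTail,
        Function.comp, Fin.succ_zero_eq_one] <;> field_simp <;> simp [Real.sq_sqrt] <;> ring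
  have hPMP : P * fromBlocks A B Ct D * P
      = fromBlocks A (B * Q) (Q * Ct) (Q * D * Q) := by
    rw [hPdef, fromBlocks_multiply, fromBlocks_multiply]
    simp [Matrix.mul_assoc]
  set Mstar : Matrix (Fin m ⊕ Fin 1) (Fin m ⊕ Fin 1) ℝ := Matrix.fromBlocks A
        (Matrix.of fun i (_ : Fin 1) => b i)
        (Matrix.of fun (_ : Fin 1) j => b j)
        (Matrix.of fun (_ : Fin 1) (_ : Fin 1) => (0 : ℝ)) with hMs
  set K : Matrix ((Fin m ⊕ Fin 1) ⊕ Fin 1) ((Fin m ⊕ Fin 1) ⊕ Fin 1) ℝ :=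
    fromBlocks Mstar 0 0 (Matrix.of fun _ _ => 2 * l) with hK
  set e : Fin m ⊕ Fin 2 ≃ (Fin m ⊕ Fin 1) ⊕ Fin 1 :=
    (Equiv.sumCongr (Equiv.refl _)
      (((finCongr (by norm_num) : Fin 2 ≃ Fin (1+1))).trans finSumFinEquiv.symm)).trans
      (Equiv.sumAssoc _ _ _).symm with he
  have el : ∀ i : Fin m, e (Sum.inl i) = Sum.inl (Sum.inl i) := fun i => rfl
  have e0 : e (Sum.inr 0) = Sum.inl (Sum.inr 0) := rfl
  have e1 : e (Sum.inr 1) = Sum.inr 0 := rfl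
  have hN : fromBlocks A (B * Q) (Q * Ct) (Q * D * Q) = (reindex e.symm e.symm) K := by
    rw [hBQ, hQC, hQDQ]
    ext i j
    rw [reindex_apply, submatrix_apply, Equiv.symm_symm]
    rcases i with i | i <;> rcases j with j | j
    · rw [el i, el j]; simp [hK, hMs]
    · rcases h2f j with rfl | rfl
      · rw [el i, e0]; simp [hK, hMs]
      · rw [el i, e1]; simp [hK, hMs]
    · rcases h2f i with rfl | rfl
      · rw [el j, e0]; simp [hK, hMs]
      · rw [el j, e1]; simp [hK, hMs]
    · rcases h2f i with rfl | rfl <;> rcases h2f j with rfl | rfl <;>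
        simp only [e0, e1] <;> simp [hK, hMs]
  have h1 : (fromBlocks A B Ct D).charpoly = K.charpoly := by
    rw [← charpoly_conj_self P _ hPP, hPMP, hN, charpoly_reindex]
  rw [h1, hK, charpoly_fromBlocks_zero₂₁, mul_comm]
  congr 1
  rw [Matrix.charpoly, det_fin_one, charmatrix_apply_eq]
  simp
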